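/- Let (X, μ) be a σ-finite measure space, let 0 < r ≤ 1, let n > 0 be a real number, let 1 ≤ p₁ < ∞ with conjugate exponent p₁′ (so 1/p₁ + 1/p₁′ = 1), and let 1 ≤ p₂ ≤ ∞. Let (λ_m)_{m∈ℕ} be real numbers with λ_m ≥ 1 for all m and ∑_m λ_m^{−κ} < ∞ for every κ > n. Let a ≥ 0, b ≥ 0, C₀ ≥ 0, and let (e_m)_{m∈ℕ} be complex-valued measurable functions on X with e_m ∈ L^{p₂}(μ) ∩ L^{p₁′}(μ), ‖e_m‖_{L^{p₂}} ≤ C₀·λ_m^{a} and ‖e_m‖_{L^{p₁′}} ≤ C₀·λ_m^{b} for all m. Then for every real s with s > n/r + a + b: (i) ∑_m λ_m^{−sr}·‖e_m‖_{L^{p₂}}^r·‖e_m‖_{L^{p₁′}}^r < ∞; and (ii) for every f ∈ L^{p₁}(μ) the series ∑_m λ_m^{−s}·(∫_X conj(e_m)·f dμ)·e_m converges absolutely in L^{p₂}(μ), and the resulting linear operator E : L^{p₁}(μ) → L^{p₂}(μ) is r-nuclear. -/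

import Mathlib

open MeasureTheory ENNReal

/-- A bounded linear operator `T : E₁ → E₂` between complex Banach spaces is
`r`-nuclear (in the sense of Grothendieck) if there are continuous linear
functionals `φ_m` on `E₁` and vectors `g_m ∈ E₂` with `T f = ∑ m, φ_m(f) • g_m`
for every `f` and `∑ m, ‖φ_m‖^r ‖g_m‖^r < ∞`. -/
def IsRNuclear {E₁ E₂ : Type*} [NormedAddCommGroup E₁] [NormedSpace ℂ E₁]
    [NormedAddCommGroup E₂] [NormedSpace ℂ E₂] (r : ℝ) (T : E₁ →L[ℂ] E₂) : Prop :=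
  ∃ (φ : ℕ → (E₁ →L[ℂ] ℂ)) (g : ℕ → E₂),
    (∀ f : E₁, HasSum (fun m => φ m f • g m) (T f)) ∧
      Summable (fun m => ‖φ m‖ ^ r * ‖g m‖ ^ r)

/-- Abstract form of the `r`-nuclearity of Bessel potentials: given exponents
`1 ≤ p₁ < ∞` (with conjugate `p₁'`) and `1 ≤ p₂ ≤ ∞`, reals `λ_m ≥ 1` whose
negative powers `λ_m^{-κ}` are summable for every `κ > n`, and functions
`e_m ∈ L^{p₂} ∩ L^{p₁'}` with `‖e_m‖_{p₂} ≤ C₀ λ_m^a`, `‖e_m‖_{p₁'} ≤ C₀ λ_m^b`,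
then for any `s > n/r + a + b` the weighted norm series is `r`-summable and the
operator `f ↦ ∑ m, λ_m^{-s} (∫ conj(e_m) f dμ) e_m : L^{p₁} → L^{p₂}` is
well defined (the series converging absolutely in `L^{p₂}`) and `r`-nuclear. -/
theorem rNuclear_of_order_gt
    {X : Type*} [MeasurableSpace X] (μ : Measure X) [SigmaFinite μ]
    (r : ℝ) (hr0 : 0 < r) (hr1 : r ≤ 1)
    (n : ℝ) (hn : 0 < n)
    (p₁ p₁' p₂ : ℝ≥0∞) [Fact (1 ≤ p₁)] [Fact (1 ≤ p₂)]
    (hp₁top : p₁ < ∞) (hconj : 1 / p₁ + 1 / p₁' = 1)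
    (lam : ℕ → ℝ) (hlam : ∀ m, 1 ≤ lam m)
    (hlamsum : ∀ κ : ℝ, n < κ → Summable (fun m : ℕ => lam m ^ (-κ)))
    (a b C₀ : ℝ) (ha : 0 ≤ a) (hb : 0 ≤ b) (hC₀ : 0 ≤ C₀)
    (e : ℕ → X → ℂ) (hmeas : ∀ m, Measurable (e m))
    (he₂ : ∀ m, MemLp (e m) p₂ μ) (he₁' : ∀ m, MemLp (e m) p₁' μ)
    (hnorm₂ : ∀ m, eLpNorm (e m) p₂ μ ≤ ENNReal.ofReal (C₀ * lam m ^ a))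
    (hnorm₁' : ∀ m, eLpNorm (e m) p₁' μ ≤ ENNReal.ofReal (C₀ * lam m ^ b)) :
    ∀ s : ℝ, n / r + a + b < s →
      Summable (fun m : ℕ =>
          lam m ^ (-(s * r)) * (eLpNorm (e m) p₂ μ).toReal ^ r *
            (eLpNorm (e m) p₁' μ).toReal ^ r) ∧
      ∃ E : Lp ℂ p₁ μ →L[ℂ] Lp ℂ p₂ μ,
        (∀ f : Lp ℂ p₁ μ,
          Summable (fun m : ℕ =>
            ‖(((lam m ^ (-s) : ℝ) : ℂ) * ∫ x, (starRingEnd ℂ) (e m x) * f x ∂μ) •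
              ((he₂ m).toLp (e m))‖) ∧
          HasSum (fun m : ℕ =>
            (((lam m ^ (-s) : ℝ) : ℂ) * ∫ x, (starRingEnd ℂ) (e m x) * f x ∂μ) •
              ((he₂ m).toLp (e m))) (E f)) ∧
        IsRNuclear r E := by
  intro s hs
  have hlampos : ∀ m, (0:ℝ) < lam m := fun m => lt_of_lt_of_le one_pos (hlam m)
  set c : ℝ := s - a - b with hc
  have hnr : n ≤ n / r := by
    rw [le_div_iff₀ hr0]; nlinarith
  have hcnr : n / r < c := by simp only [hc]; linarith
  have hnc : n < c := lt_of_le_of_lt hnr hcnr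
  have hncr : n < c * r := by
    calc n = (n / r) * r := by field_simp
    _ < c * r := mul_lt_mul_of_pos_right hcnr hr0
  set D : ℝ := C₀ ^ r * C₀ ^ r with hD
  have hpow : ∀ m, lam m ^ (-(s*r)) * (C₀ * lam m ^ a) ^ r * (C₀ * lam m ^ b) ^ r
      = D * lam m ^ (-(c*r)) := by
    intro m
    have h0 := hlampos m
    rw [Real.mul_rpow hC₀ (Real.rpow_nonneg h0.le _),
        Real.mul_rpow hC₀ (Real.rpow_nonneg h0.le _),
        ← Real.rpow_mul h0.le, ← Real.rpow_mul h0.le]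
    have hexp : lam m ^ (-(s*r)) * lam m ^ (a*r) * lam m ^ (b*r) = lam m ^ (-(c*r)) := by
      rw [← Real.rpow_add h0, ← Real.rpow_add h0]
      congr 1; simp only [hc]; ring
    calc lam m ^ (-(s*r)) * (C₀ ^ r * lam m ^ (a*r)) * (C₀ ^ r * lam m ^ (b*r))
        = D * (lam m ^ (-(s*r)) * lam m ^ (a*r) * lam m ^ (b*r)) := by rw [hD]; ring
      _ = D * lam m ^ (-(c*r)) := by rw [hexp]
  -- norms of e in terms of lam
  have ht₂ : ∀ m, (eLpNorm (e m) p₂ μ).toReal ≤ C₀ * lam m ^ a := fun m =>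
    ENNReal.toReal_le_of_le_ofReal
      (mul_nonneg hC₀ (Real.rpow_nonneg (hlampos m).le _)) (hnorm₂ m)
  have ht₁ : ∀ m, (eLpNorm (e m) p₁' μ).toReal ≤ C₀ * lam m ^ b := fun m =>
    ENNReal.toReal_le_of_le_ofReal
      (mul_nonneg hC₀ (Real.rpow_nonneg (hlampos m).le _)) (hnorm₁' m)
  constructor
  · -- part (i)
    refine Summable.of_nonneg_of_le (fun m =>
        mul_nonneg (mul_nonneg (Real.rpow_nonneg (hlampos m).le _)
          (Real.rpow_nonneg ENNReal.toReal_nonneg _))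
          (Real.rpow_nonneg ENNReal.toReal_nonneg _)) (fun m => ?_)
      (((hlamsum (c*r) hncr).mul_left D))
    calc lam m ^ (-(s*r)) * (eLpNorm (e m) p₂ μ).toReal ^ r *
            (eLpNorm (e m) p₁' μ).toReal ^ r
        ≤ lam m ^ (-(s*r)) * (C₀ * lam m ^ a) ^ r * (C₀ * lam m ^ b) ^ r := by
          have hA := Real.rpow_le_rpow ENNReal.toReal_nonneg (ht₂ m) hr0.le
          have hB := Real.rpow_le_rpow ENNReal.toReal_nonneg (ht₁ m) hr0.le
          refine mul_le_mul (mul_le_mul_of_nonneg_left hA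
            (Real.rpow_nonneg (hlampos m).le _)) hB
            (Real.rpow_nonneg ENNReal.toReal_nonneg _)
            (mul_nonneg (Real.rpow_nonneg (hlampos m).le _)
              (Real.rpow_nonneg (mul_nonneg hC₀
                (Real.rpow_nonneg (hlampos m).le _)) _))
      _ = D * lam m ^ (-(c*r)) := hpow m
  · -- part (ii)
    set g : ℕ → Lp ℂ p₂ μ := fun m => (he₂ m).toLp (e m) with hgdef
    have hgnorm : ∀ m, ‖g m‖ ≤ C₀ * lam m ^ a := fun m => by
      rw [hgdef]; rw [Lp.norm_toLp]; exact ht₂ m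
    have hpqr : (1:ℝ≥0∞)/1 = 1/p₁' + 1/p₁ := by
      rw [add_comm, hconj]; simp
    -- Hölder: integrability of conj(e m) * f and bound
    have hint : ∀ m (f : Lp ℂ p₁ μ),
        Integrable (fun x => (starRingEnd ℂ) (e m x) * f x) μ ∧
        ‖∫ x, (starRingEnd ℂ) (e m x) * f x ∂μ‖ ≤
          (eLpNorm (e m) p₁' μ).toReal * ‖f‖ := by
      intro m f
      have hconjm : AEStronglyMeasurable (fun x => (starRingEnd ℂ) (e m x)) μ :=
        ((continuous_star.measurable.comp (hmeas m)).aestronglyMeasurable)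
      have hasm : AEStronglyMeasurable (fun x => (starRingEnd ℂ) (e m x) * f x) μ :=
        hconjm.mul (Lp.aestronglyMeasurable f)
      have hH : eLpNorm (fun x => (starRingEnd ℂ) (e m x) * f x) 1 μ
          ≤ eLpNorm (e m) p₁' μ * eLpNorm (f : X → ℂ) p₁ μ := by
        have hT : ENNReal.HolderTriple p₁' p₁ 1 := ⟨by simpa [one_div] using hpqr.symm⟩
        refine (eLpNorm_le_eLpNorm_mul_eLpNorm'_of_norm (p := p₁') (q := p₁) (he₁' m).aestronglyMeasurable
          (Lp.aestronglyMeasurable f) (fun u v => (starRingEnd ℂ) u * v) 1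
          (Filter.Eventually.of_forall fun x => ?_)).trans (by simp)
        simp [norm_mul]
      have hfin : eLpNorm (e m) p₁' μ * eLpNorm (f : X → ℂ) p₁ μ < ∞ :=
        ENNReal.mul_lt_top (he₁' m).2 (Lp.eLpNorm_lt_top f)
      have hmem : MemLp (fun x => (starRingEnd ℂ) (e m x) * f x) 1 μ :=
        ⟨hasm, lt_of_le_of_lt hH hfin⟩
      have hintg := memLp_one_iff_integrable.mp hmem
      refine ⟨hintg, ?_⟩
      calc ‖∫ x, (starRingEnd ℂ) (e m x) * f x ∂μ‖
          ≤ ∫ x, ‖(starRingEnd ℂ) (e m x) * f x‖ ∂μ := norm_integral_le_integral_norm _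
        _ = (eLpNorm (fun x => (starRingEnd ℂ) (e m x) * f x) 1 μ).toReal := by
            rw [integral_norm_eq_lintegral_enorm hasm, eLpNorm_one_eq_lintegral_enorm]
        _ ≤ (eLpNorm (e m) p₁' μ * eLpNorm (f : X → ℂ) p₁ μ).toReal :=
            ENNReal.toReal_mono hfin.ne hH
        _ = (eLpNorm (e m) p₁' μ).toReal * ‖f‖ := by
            rw [ENNReal.toReal_mul, Lp.norm_def]
    -- the functionals
    have hK : ∀ m, (0:ℝ) ≤ lam m ^ (-s) * (eLpNorm (e m) p₁' μ).toReal := fun m =>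
      mul_nonneg (Real.rpow_nonneg (hlampos m).le _) ENNReal.toReal_nonneg
    set φlin : ℕ → (Lp ℂ p₁ μ →ₗ[ℂ] ℂ) := fun m =>
      { toFun := fun f => ((lam m ^ (-s) : ℝ) : ℂ) * ∫ x, (starRingEnd ℂ) (e m x) * f x ∂μ
        map_add' := by
          intro f f'
          have h1 : ∫ x, (starRingEnd ℂ) (e m x) * (f + f' : Lp ℂ p₁ μ) x ∂μ
              = (∫ x, (starRingEnd ℂ) (e m x) * f x ∂μ)
                + ∫ x, (starRingEnd ℂ) (e m x) * f' x ∂μ := by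
            rw [← integral_add (hint m f).1 (hint m f').1]
            refine integral_congr_ae ?_
            filter_upwards [Lp.coeFn_add f f'] with x hx
            simp only [hx, Pi.add_apply]; ring
          simp only [h1]; ring
        map_smul' := by
          intro z f
          have h1 : ∫ x, (starRingEnd ℂ) (e m x) * (z • f : Lp ℂ p₁ μ) x ∂μ
              = z * ∫ x, (starRingEnd ℂ) (e m x) * f x ∂μ := by
            rw [← integral_const_mul]
            refine integral_congr_ae ?_
            filter_upwards [Lp.coeFn_smul z f] with x hx
            simp only [hx, Pi.smul_apply, smul_eq_mul]; ring
          simp only [h1, RingHom.id_apply, smul_eq_mul]; ring } with hφlin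
    have hφbound : ∀ m (f : Lp ℂ p₁ μ),
        ‖φlin m f‖ ≤ (lam m ^ (-s) * (eLpNorm (e m) p₁' μ).toReal) * ‖f‖ := by
      intro m f
      have : ‖φlin m f‖ = lam m ^ (-s) * ‖∫ x, (starRingEnd ℂ) (e m x) * f x ∂μ‖ := by
        simp [hφlin, norm_mul, Complex.norm_real,
          abs_of_nonneg (Real.rpow_nonneg (hlampos m).le (-s))]
      rw [this, mul_assoc]
      exact mul_le_mul_of_nonneg_left (hint m f).2 (Real.rpow_nonneg (hlampos m).le _)
    set φ : ℕ → (Lp ℂ p₁ μ →L[ℂ] ℂ) := fun m => (φlin m).mkContinuous _ (hφbound m) with hφdef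
    have hφnorm : ∀ m, ‖φ m‖ ≤ lam m ^ (-s) * (eLpNorm (e m) p₁' μ).toReal := fun m =>
      LinearMap.mkContinuous_norm_le _ (hK m) _
    have hφapp : ∀ m (f : Lp ℂ p₁ μ),
        φ m f = ((lam m ^ (-s) : ℝ) : ℂ) * ∫ x, (starRingEnd ℂ) (e m x) * f x ∂μ := fun m f => rfl
    -- bound on ‖φ m‖ * ‖g m‖
    have hφg : ∀ m, ‖φ m‖ * ‖g m‖ ≤ (C₀ * C₀) * lam m ^ (-c) := by
      intro m
      have h0 := hlampos m
      have h1 : ‖φ m‖ ≤ lam m ^ (-s) * (C₀ * lam m ^ b) := by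
        refine le_trans (hφnorm m) ?_
        exact mul_le_mul_of_nonneg_left (ht₁ m) (Real.rpow_nonneg h0.le _)
      have h2 : (lam m ^ (-s) * (C₀ * lam m ^ b)) * (C₀ * lam m ^ a)
          = (C₀ * C₀) * lam m ^ (-c) := by
        have hexp : lam m ^ (-s) * lam m ^ b * lam m ^ a = lam m ^ (-c) := by
          rw [← Real.rpow_add h0, ← Real.rpow_add h0]
          congr 1; simp only [hc]; ring
        calc (lam m ^ (-s) * (C₀ * lam m ^ b)) * (C₀ * lam m ^ a)
            = (C₀ * C₀) * (lam m ^ (-s) * lam m ^ b * lam m ^ a) := by ring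
          _ = (C₀ * C₀) * lam m ^ (-c) := by rw [hexp]
      calc ‖φ m‖ * ‖g m‖ ≤ (lam m ^ (-s) * (C₀ * lam m ^ b)) * (C₀ * lam m ^ a) := by
            refine mul_le_mul h1 (hgnorm m) (norm_nonneg _)
              (mul_nonneg (Real.rpow_nonneg (hlampos m).le _)
                (mul_nonneg hC₀ (Real.rpow_nonneg (hlampos m).le _)))
        _ = (C₀ * C₀) * lam m ^ (-c) := h2
    -- operator series
    set T : ℕ → (Lp ℂ p₁ μ →L[ℂ] Lp ℂ p₂ μ) := fun m => (φ m).smulRight (g m) with hTdef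
    have hTnorm : ∀ m, ‖T m‖ = ‖φ m‖ * ‖g m‖ := fun m =>
      ContinuousLinearMap.norm_smulRight_apply _ _
    have hTsum : Summable (fun m => ‖T m‖) := by
      refine Summable.of_nonneg_of_le (fun m => norm_nonneg _) (fun m => ?_)
        ((hlamsum c hnc).mul_left (C₀ * C₀))
      rw [hTnorm m]; exact hφg m
    have hsT : Summable T := Summable.of_norm hTsum
    refine ⟨∑' m, T m, ?_, ?_⟩
    · intro f
      have hE : HasSum T (∑' m, T m) := hsT.hasSum
      have happ : HasSum (fun m => T m f) ((∑' m, T m) f) :=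
        hE.mapL (ContinuousLinearMap.apply ℂ (Lp ℂ p₂ μ) f)
      have hTf : ∀ m, T m f =
          (((lam m ^ (-s) : ℝ) : ℂ) * ∫ x, (starRingEnd ℂ) (e m x) * f x ∂μ) •
            ((he₂ m).toLp (e m)) := fun m => by
        rw [hTdef]; simp only [ContinuousLinearMap.smulRight_apply]
        rw [hφapp m f]
      constructor
      · refine Summable.of_nonneg_of_le (fun m => norm_nonneg _) (fun m => ?_)
          (hTsum.mul_right ‖f‖)
        rw [← hTf m]
        exact (T m).le_opNorm f
      · have heq : (fun m : ℕ =>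
            (((lam m ^ (-s) : ℝ) : ℂ) * ∫ x, (starRingEnd ℂ) (e m x) * f x ∂μ) •
              ((he₂ m).toLp (e m))) = fun m => T m f := funext fun m => (hTf m).symm
        rw [heq]
        exact happ
    · refine ⟨φ, g, fun f => ?_, ?_⟩
      · have hE : HasSum T (∑' m, T m) := hsT.hasSum
        have happ : HasSum (fun m => T m f) ((∑' m, T m) f) :=
          hE.mapL (ContinuousLinearMap.apply ℂ (Lp ℂ p₂ μ) f)
        have : (fun m => φ m f • g m) = fun m => T m f := by
          funext m; rw [hTdef]; simp [ContinuousLinearMap.smulRight_apply]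
        rw [this]
        exact happ
      · refine Summable.of_nonneg_of_le (fun m => by positivity) (fun m => ?_)
          ((hlamsum (c*r) hncr).mul_left ((C₀*C₀) ^ r))
        have h1 : ‖φ m‖ ^ r * ‖g m‖ ^ r = (‖φ m‖ * ‖g m‖) ^ r :=
          (Real.mul_rpow (norm_nonneg _) (norm_nonneg _)).symm
        rw [h1]
        calc (‖φ m‖ * ‖g m‖) ^ r ≤ ((C₀ * C₀) * lam m ^ (-c)) ^ r :=
              Real.rpow_le_rpow (by positivity) (hφg m) hr0.le
          _ = (C₀*C₀) ^ r * lam m ^ (-(c*r)) := by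
              rw [Real.mul_rpow (by positivity) (Real.rpow_nonneg (hlampos m).le _),
                ← Real.rpow_mul (hlampos m).le]
              congr 2; ring
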